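/- arXiv:1610.04690 — 4 statements merged into one kernel-verified Lean document; each statement's English description precedes it below -/
import Mathlib

section
/- In a signed graph Σ, an edge e belongs to some negative cycle if and only if e lies in an unbalanced block of Σ (a maximal 2-connected subgraph containing a negative cycle). -/
open SimpleGraph
variable {V : Type*}

/-- A signed graph `(G, σ)` is balanced: every cycle has sign `+1`. -/
def SBalanced (G : SimpleGraph V) (σ : Sym2 V → ℤˣ) : Prop :=
  ∀ (u : V) (w : G.Walk u u), w.IsCycle → (w.edges.map σ).prod = 1

/-- `B` has no cut vertex. -/
def NoCutVertex (G : SimpleGraph V) (B : G.Subgraph) : Prop :=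
  ∀ v ∈ B.verts, (B.deleteVerts {v}).verts.Nonempty → (B.deleteVerts {v}).Connected

/-- A block: a maximal connected subgraph with no cut vertex. -/
def IsBlock (G : SimpleGraph V) (B : G.Subgraph) : Prop :=
  B.Connected ∧ NoCutVertex G B ∧
    ∀ B' : G.Subgraph, B'.Connected → NoCutVertex G B' → B ≤ B' → B' = B

/-- The subgraph `B` contains a negative cycle. -/
def UnbalancedSub (G : SimpleGraph V) (σ : Sym2 V → ℤˣ) (B : G.Subgraph) : Prop :=
  ∃ (u : V) (w : G.Walk u u), w.IsCycle ∧ (∀ e ∈ w.edges, e ∈ B.edgeSet) ∧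
    (w.edges.map σ).prod = -1

namespace SGAux

variable {G : SimpleGraph V}

lemma prod_rotate [DecidableEq V] (σ : Sym2 V → ℤˣ) {u v : V} (c : G.Walk v v)
    (h : u ∈ c.support) :
    (((c.rotate u h).edges).map σ).prod = ((c.edges).map σ).prod :=
  ((c.rotate_edges u h).perm.map σ).prod_eq

lemma toSubgraph_le_of {a b : V} (H : G.Subgraph) (p : G.Walk a b)
    (hs : ∀ v ∈ p.support, v ∈ H.verts) (he : ∀ f ∈ p.edges, f ∈ H.edgeSet) :
    p.toSubgraph ≤ H := by
  induction p with
  | nil =>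
    rw [Walk.toSubgraph, singletonSubgraph_le_iff]
    exact hs _ (by simp)
  | @cons u w b h q ih =>
    rw [Walk.toSubgraph]
    have hadj : H.Adj u w := Subgraph.mem_edgeSet.mp (he s(u, w) (by simp))
    refine sup_le (subgraphOfAdj_le_of_adj H hadj) (ih ?_ ?_)
    · intro v hv; exact hs v (by simp [hv])
    · intro f hf; exact he f (by simp [hf])

lemma support_le_of_toSubgraph_le {a b : V} {H : G.Subgraph} {p : G.Walk a b}
    (h : p.toSubgraph ≤ H) : ∀ v ∈ p.support, v ∈ H.verts := fun v hv =>
  h.1 (p.mem_verts_toSubgraph.mpr hv)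

lemma edges_le_of_toSubgraph_le {a b : V} {H : G.Subgraph} {p : G.Walk a b}
    (h : p.toSubgraph ≤ H) : ∀ f ∈ p.edges, f ∈ H.edgeSet := fun f hf =>
  Subgraph.edgeSet_mono h (p.mem_edges_toSubgraph.mpr hf)

lemma closed_tail_mem {v : V} (c : G.Walk v v) (hn : ¬ c.Nil) {w : V}
    (hw : w ∈ c.support) : w ∈ c.support.tail := by
  cases c with
  | nil => exact absurd Walk.Nil.nil hn
  | cons h p =>
    rw [Walk.support_cons] at hw ⊢
    rcases List.mem_cons.mp hw with rfl | hw
    · exact p.end_mem_support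
    · exact hw

lemma mem_support_rotate_iff [DecidableEq V] {u v : V} {c : G.Walk v v}
    (hc : c.IsCycle) (h : u ∈ c.support) {w : V} :
    w ∈ (c.rotate u h).support ↔ w ∈ c.support := by
  have hrot := Walk.support_rotate c u h
  have hn : ¬ c.Nil := hc.isCircuit.not_nil
  have hn' : ¬ (c.rotate u h).Nil := (hc.rotate h).isCircuit.not_nil
  constructor
  · intro hw
    have := hrot.perm.mem_iff.mp (closed_tail_mem _ hn' hw)
    exact List.mem_of_mem_tail this
  · intro hw
    have := hrot.perm.mem_iff.mpr (closed_tail_mem _ hn hw)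
    exact List.mem_of_mem_tail this

lemma exists_first_hit {y c : V} (W : G.Walk y c) (S : V → Prop) [DecidablePred S]
    (hy : ¬ S y) (hc : S c) :
    ∃ b, S b ∧ ∃ R : G.Walk y b, (∀ v ∈ R.support, v ∈ W.support) ∧
      (∀ f ∈ R.edges, f ∈ W.edges) ∧ (∀ v ∈ R.support, S v → v = b) := by
  induction W with
  | nil => exact absurd hc hy
  | @cons a z c h W ih =>
    by_cases hz : S z
    · refine ⟨z, hz, Walk.cons h Walk.nil, ?_, ?_, ?_⟩
      · intro v hv; simp only [Walk.support_cons, Walk.support_nil, List.mem_cons,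
          List.not_mem_nil, or_false] at hv ⊢
        rcases hv with rfl | rfl
        · left; rfl
        · right; exact W.start_mem_support
      · intro f hf; simp only [Walk.edges_cons, Walk.edges_nil] at hf ⊢
        simp_all
      · intro v hv hSv
        simp only [Walk.support_cons, Walk.support_nil, List.mem_cons,
          List.not_mem_nil, or_false] at hv
        rcases hv with rfl | rfl
        · exact absurd hSv hy
        · rfl
    · obtain ⟨b, hSb, R, hRs, hRe, hRfirst⟩ := ih hz hc
      refine ⟨b, hSb, Walk.cons h R, ?_, ?_, ?_⟩
      · intro v hv
        rw [Walk.support_cons, List.mem_cons] at hv ⊢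
        exact hv.imp id (hRs v)
      · intro f hf
        rw [Walk.edges_cons, List.mem_cons] at hf ⊢
        exact hf.imp id (hRe f)
      · intro v hv hSv
        rw [Walk.support_cons, List.mem_cons] at hv
        rcases hv with rfl | hv
        · exact absurd hSv hy
        · exact hRfirst v hv hSv

lemma isPath_append {a b c : V} {p : G.Walk a b} {q : G.Walk b c}
    (hp : p.IsPath) (hq : q.IsPath)
    (hpq : ∀ v ∈ p.support, v ∈ q.support → v = b) : (p.append q).IsPath := by
  rw [Walk.isPath_def, Walk.support_append, List.nodup_append]
  refine ⟨hp.support_nodup, ?_, ?_⟩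
  · have := hq.support_nodup
    rw [q.support_eq_cons] at this
    exact this.of_cons
  · intro v hv v' hv' hvv'
    subst hvv'
    have hvq : v ∈ q.support := List.mem_of_mem_tail hv'
    have : v = b := hpq v hv hvq
    subst this
    have := hq.support_nodup
    rw [q.support_eq_cons] at this
    exact (List.nodup_cons.mp this).1 hv'

lemma cycle_split [DecidableEq V] {x b : V} {c : G.Walk x x} (hc : c.IsCycle)
    (hb : b ∈ c.support) (hxb : x ≠ b) :
    (c.takeUntil b hb).IsPath ∧ (c.dropUntil b hb).IsPath := by
  have hspec := c.take_spec hb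
  set T := c.takeUntil b hb with hTdef
  set Dr := c.dropUntil b hb with hDdef
  have hsup : c.support = T.support ++ Dr.support.tail := by
    rw [← hspec, Walk.support_append]
  have htail : c.support.tail = T.support.tail ++ Dr.support.tail := by
    rw [hsup, T.support_eq_cons]; rfl
  have hnd := hc.support_nodup
  rw [htail, List.nodup_append] at hnd
  obtain ⟨nd1, nd2, disj⟩ := hnd
  have hxD : x ∈ Dr.support.tail := Walk.end_mem_tail_support_of_ne (Ne.symm hxb) Dr
  have hbT : b ∈ T.support.tail := Walk.end_mem_tail_support_of_ne hxb T
  constructor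
  · rw [Walk.isPath_def, T.support_eq_cons, List.nodup_cons]
    exact ⟨fun hmem => disj _ hmem _ hxD rfl, nd1⟩
  · rw [Walk.isPath_def, Dr.support_eq_cons, List.nodup_cons]
    exact ⟨fun hmem => disj _ hbT _ hmem rfl, nd2⟩

lemma theta [DecidableEq V] (σ : Sym2 V → ℤˣ) {u x y b : V} (C : G.Walk u u)
    (hC : C.IsCycle) (hCneg : ((C.edges).map σ).prod = -1)
    (hx : x ∈ C.support) (hb : b ∈ C.support) (hxb : x ≠ b)
    (hadj : G.Adj x y)
    (R : G.Walk y b) (hR : R.IsPath) (hRx : x ∉ R.support)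
    (hRC : ∀ v ∈ R.support, v ∈ C.support → v = b)
    (heC : s(x,y) ∉ C.edges) :
    ∃ (w : V) (D : G.Walk w w), D.IsCycle ∧ s(x,y) ∈ D.edges ∧
      ((D.edges).map σ).prod = -1 ∧
      ∀ f ∈ D.edges, f = s(x,y) ∨ f ∈ R.edges ∨ f ∈ C.edges := by
  have hc' : (C.rotate x hx).IsCycle := hC.rotate hx
  have hb' : b ∈ (C.rotate x hx).support := (mem_support_rotate_iff hC hx).mpr hb
  have hperm : List.Perm (C.rotate x hx).edges C.edges := (C.rotate_edges x hx).perm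
  obtain ⟨hT, hD⟩ := cycle_split hc' hb' hxb
  set c' := C.rotate x hx
  set T := c'.takeUntil b hb' with hTdef
  set Dr := c'.dropUntil b hb' with hDdef
  have hTsub : T.support ⊆ c'.support := c'.support_takeUntil_subset hb'
  have hDsub : Dr.support ⊆ c'.support := c'.support_dropUntil_subset hb'
  have hTC : ∀ v ∈ T.support, v ∈ C.support := fun v hv =>
    (mem_support_rotate_iff hC hx).mp (hTsub hv)
  have hDC : ∀ v ∈ Dr.support, v ∈ C.support := fun v hv =>
    (mem_support_rotate_iff hC hx).mp (hDsub hv)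
  have hTe : ∀ f ∈ T.edges, f ∈ C.edges := fun f hf =>
    hperm.mem_iff.mp (c'.edges_takeUntil_subset hb' hf)
  have hDe : ∀ f ∈ Dr.edges, f ∈ C.edges := fun f hf =>
    hperm.mem_iff.mp (c'.edges_dropUntil_subset hb' hf)
  -- the two candidate cycles
  have hP1 : (R.append Dr).IsPath := by
    refine isPath_append hR hD fun v hv hv' => hRC v hv (hDC v hv')
  have hP2 : (R.append T.reverse).IsPath := by
    refine isPath_append hR hT.reverse fun v hv hv' => ?_
    rw [Walk.support_reverse, List.mem_reverse] at hv'
    exact hRC v hv (hTC v hv')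
  have hnotR : s(x, y) ∉ R.edges := fun hmem =>
    hRx (R.fst_mem_support_of_mem_edges hmem)
  have he1 : s(x, y) ∉ (R.append Dr).edges := by
    rw [Walk.edges_append, List.mem_append]
    rintro (h | h)
    · exact hnotR h
    · exact heC (hDe _ h)
  have he2 : s(x, y) ∉ (R.append T.reverse).edges := by
    rw [Walk.edges_append, List.mem_append]
    rintro (h | h)
    · exact hnotR h
    · rw [Walk.edges_reverse, List.mem_reverse] at h
      exact heC (hTe _ h)
  have hD1 : (Walk.cons hadj (R.append Dr)).IsCycle :=
    (Walk.cons_isCycle_iff _ hadj).mpr ⟨hP1, he1⟩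
  have hD2 : (Walk.cons hadj (R.append T.reverse)).IsCycle :=
    (Walk.cons_isCycle_iff _ hadj).mpr ⟨hP2, he2⟩
  -- signs
  have hsplit : ((T.edges.map σ).prod) * ((Dr.edges.map σ).prod) = -1 := by
    have h1 : T.append Dr = c' := c'.take_spec hb'
    have : ((c'.edges.map σ).prod) = -1 := by
      rw [(hperm.map σ).prod_eq]; exact hCneg
    rw [← this, ← h1, Walk.edges_append, List.map_append, List.prod_append]
  have hprod1 : ((Walk.cons hadj (R.append Dr)).edges.map σ).prod
      = σ s(x, y) * ((R.edges.map σ).prod * (Dr.edges.map σ).prod) := by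
    rw [Walk.edges_cons, Walk.edges_append, List.map_cons, List.prod_cons,
      List.map_append, List.prod_append]
  have hprod2 : ((Walk.cons hadj (R.append T.reverse)).edges.map σ).prod
      = σ s(x, y) * ((R.edges.map σ).prod * (T.edges.map σ).prod) := by
    rw [Walk.edges_cons, Walk.edges_append, List.map_cons, List.prod_cons,
      List.map_append, List.prod_append, Walk.edges_reverse, List.map_reverse,
      List.prod_reverse]
  have hmul : ((Walk.cons hadj (R.append Dr)).edges.map σ).prod *
      ((Walk.cons hadj (R.append T.reverse)).edges.map σ).prod = -1 := by
    rw [hprod1, hprod2]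
    have : σ s(x, y) * ((R.edges.map σ).prod * (Dr.edges.map σ).prod) *
        (σ s(x, y) * ((R.edges.map σ).prod * (T.edges.map σ).prod)) =
        (σ s(x, y) * σ s(x, y)) * (((R.edges.map σ).prod * (R.edges.map σ).prod) *
          ((T.edges.map σ).prod * (Dr.edges.map σ).prod)) := by
      rw [mul_mul_mul_comm, mul_mul_mul_comm ((R.edges.map σ).prod) ((Dr.edges.map σ).prod),
        mul_comm ((Dr.edges.map σ).prod) ((T.edges.map σ).prod)]
    rw [this, Int.units_mul_self, Int.units_mul_self, one_mul, one_mul, hsplit]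
  have hedges1 : ∀ f ∈ (Walk.cons hadj (R.append Dr)).edges,
      f = s(x,y) ∨ f ∈ R.edges ∨ f ∈ C.edges := by
    intro f hf
    rw [Walk.edges_cons, List.mem_cons, Walk.edges_append, List.mem_append] at hf
    rcases hf with rfl | hf | hf
    · exact Or.inl rfl
    · exact Or.inr (Or.inl hf)
    · exact Or.inr (Or.inr (hDe _ hf))
  have hedges2 : ∀ f ∈ (Walk.cons hadj (R.append T.reverse)).edges,
      f = s(x,y) ∨ f ∈ R.edges ∨ f ∈ C.edges := by
    intro f hf
    rw [Walk.edges_cons, List.mem_cons, Walk.edges_append, List.mem_append] at hf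
    rcases hf with rfl | hf | hf
    · exact Or.inl rfl
    · exact Or.inr (Or.inl hf)
    · rw [Walk.edges_reverse, List.mem_reverse] at hf
      exact Or.inr (Or.inr (hTe _ hf))
  rcases Int.units_eq_one_or (((Walk.cons hadj (R.append Dr)).edges.map σ).prod) with h1 | h1
  · refine ⟨x, Walk.cons hadj (R.append T.reverse), hD2, by simp, ?_, hedges2⟩
    rw [h1, one_mul] at hmul
    exact hmul
  · exact ⟨x, Walk.cons hadj (R.append Dr), hD1, by simp, h1, hedges1⟩

lemma mem_edge_of_mem_support {a c : V} (p : G.Walk a c) (hn : ¬ p.Nil) :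
    ∀ v ∈ p.support, ∃ f ∈ p.edges, v ∈ f := by
  induction p with
  | nil => exact absurd Walk.Nil.nil hn
  | @cons a z c h q ih =>
    intro v hv
    rw [Walk.support_cons, List.mem_cons] at hv
    rcases hv with rfl | hv
    · exact ⟨s(v, z), by simp, by simp⟩
    · cases q with
      | nil =>
        simp only [Walk.support_nil, List.mem_singleton] at hv
        subst hv
        exact ⟨s(a, v), by simp, by simp⟩
      | cons h' q' =>
        obtain ⟨f, hf, hvf⟩ := ih (by simp [Walk.not_nil_cons]) v hv
        exact ⟨f, by rw [Walk.edges_cons]; exact List.mem_cons_of_mem _ hf, hvf⟩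

lemma support_subset_verts {B : G.Subgraph} {a c : V} (p : G.Walk a c) (hn : ¬ p.Nil)
    (hE : ∀ f ∈ p.edges, f ∈ B.edgeSet) : ∀ v ∈ p.support, v ∈ B.verts := by
  intro v hv
  obtain ⟨f, hf, hvf⟩ := mem_edge_of_mem_support p hn v hv
  induction f with
  | _ a b =>
    have : B.Adj a b := Subgraph.mem_edgeSet.mp (hE _ hf)
    rcases Sym2.mem_iff.mp hvf with rfl | rfl
    · exact this.fst_mem
    · exact this.snd_mem

lemma step [DecidableEq V] (σ : Sym2 V → ℤˣ) {B : G.Subgraph} (hNC : NoCutVertex G B)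
    {u x y : V} (C : G.Walk u u) (hC : C.IsCycle)
    (hCE : ∀ f ∈ C.edges, f ∈ B.edgeSet) (hCneg : ((C.edges).map σ).prod = -1)
    (hx : x ∈ C.support) (hadj : B.Adj x y) :
    ∃ (w : V) (D : G.Walk w w), D.IsCycle ∧ s(x,y) ∈ D.edges ∧
      ((D.edges).map σ).prod = -1 ∧ ∀ f ∈ D.edges, f ∈ B.edgeSet := by
  have hGadj : G.Adj x y := hadj.adj_sub
  have hne : x ≠ y := hGadj.ne
  by_cases hec : s(x,y) ∈ C.edges
  · exact ⟨u, C, hC, hec, hCneg, hCE⟩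
  by_cases hyC : y ∈ C.support
  · obtain ⟨w, D, hD, heD, hDneg, hDedges⟩ :=
      theta σ C hC hCneg hx hyC hne hGadj Walk.nil Walk.IsPath.nil
        (by simp [hne]) (by simp) hec
    refine ⟨w, D, hD, heD, hDneg, fun f hf => ?_⟩
    rcases hDedges f hf with rfl | hf' | hf'
    · exact Subgraph.mem_edgeSet.mpr hadj
    · simp at hf'
    · exact hCE f hf'
  · -- y off the cycle: find a path from y back to the cycle avoiding x
    have hxB : x ∈ B.verts := hadj.fst_mem
    have hyB : y ∈ B.verts := hadj.snd_mem
    have hCnn : ¬ C.Nil := hC.isCircuit.not_nil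
    -- a vertex of C different from x
    obtain ⟨z, hadj', q, hq⟩ := Walk.not_nil_iff.mp (hC.rotate hx).isCircuit.not_nil
    have hzC : z ∈ C.support := by
      refine (mem_support_rotate_iff hC hx).mp ?_
      rw [hq]; simp
    have hzx : z ≠ x := hadj'.ne'
    have hCverts : ∀ v ∈ C.support, v ∈ B.verts :=
      support_subset_verts C hCnn (fun f hf => hCE f hf)
    have hyD : y ∈ (B.deleteVerts {x}).verts := by
      simp only [Subgraph.deleteVerts_verts, Set.mem_diff, Set.mem_singleton_iff]
      exact ⟨hyB, hne.symm⟩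
    have hzD : z ∈ (B.deleteVerts {x}).verts := by
      simp only [Subgraph.deleteVerts_verts, Set.mem_diff, Set.mem_singleton_iff]
      exact ⟨hCverts z hzC, hzx⟩
    have hconn := hNC x hxB ⟨y, hyD⟩
    rw [Subgraph.connected_iff_forall_exists_walk_subgraph] at hconn
    obtain ⟨W, hW⟩ := hconn.2 hyD hzD
    obtain ⟨b, hSb, R₀, hR₀s, hR₀e, hfirst⟩ :=
      exists_first_hit W (· ∈ C.support) hyC hzC
    set R := R₀.bypass with hRdef
    have hRs : ∀ v ∈ R.support, v ∈ R₀.support := fun v hv => R₀.support_bypass_subset hv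
    have hRDel : ∀ v ∈ R.support, v ∈ (B.deleteVerts {x}).verts := fun v hv =>
      support_le_of_toSubgraph_le hW v (hR₀s v (hRs v hv))
    have hRx : x ∉ R.support := by
      intro hmem
      have := hRDel x hmem
      simp [Subgraph.deleteVerts_verts] at this
    have hxb : x ≠ b := by
      intro h; exact hRx (h ▸ R.end_mem_support)
    obtain ⟨w, D, hD, heD, hDneg, hDedges⟩ :=
      theta σ C hC hCneg hx hSb hxb hGadj R R₀.bypass_isPath hRx
        (fun v hv hvC => hfirst v (hRs v hv) hvC) hec
    refine ⟨w, D, hD, heD, hDneg, fun f hf => ?_⟩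
    rcases hDedges f hf with rfl | hf' | hf'
    · exact Subgraph.mem_edgeSet.mpr hadj
    · have : f ∈ W.edges := hR₀e f (R₀.edges_bypass_subset hf')
      exact Subgraph.edgeSet_mono B.deleteVerts_le (edges_le_of_toSubgraph_le hW f this)
    · exact hCE f hf'

lemma reachC [DecidableEq V] (σ : Sym2 V → ℤˣ) {B : G.Subgraph} (hNC : NoCutVertex G B) :
    ∀ n : ℕ, ∀ {u x c : V} (C : G.Walk u u), C.IsCycle →
      (∀ f ∈ C.edges, f ∈ B.edgeSet) → ((C.edges).map σ).prod = -1 →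
      ∀ (p : G.Walk x c), p.toSubgraph ≤ B → c ∈ C.support → p.length ≤ n →
      ∃ (u' : V) (C' : G.Walk u' u'), C'.IsCycle ∧ (∀ f ∈ C'.edges, f ∈ B.edgeSet) ∧
        ((C'.edges).map σ).prod = -1 ∧ x ∈ C'.support := by
  intro n
  induction n with
  | zero =>
    intro u x c C hC hCE hCneg p hp hc hlen
    have : p.Nil := by
      rw [Walk.nil_iff_length_eq]; omega
    obtain rfl : x = c := this.eq
    exact ⟨u, C, hC, hCE, hCneg, hc⟩
  | succ n ih =>
    intro u x c C hC hCE hCneg p hp hc hlen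
    by_cases hxC : x ∈ C.support
    · exact ⟨u, C, hC, hCE, hCneg, hxC⟩
    cases p with
    | nil => exact absurd hc hxC
    | @cons a z c h q =>
      rw [Walk.toSubgraph] at hp
      have hq : q.toSubgraph ≤ B := le_trans le_sup_right hp
      have hBadj : B.Adj x z := by
        have : G.subgraphOfAdj h ≤ B := le_trans le_sup_left hp
        exact this.2 (by simp)
      obtain ⟨u', C', hC', hC'E, hC'neg, hzC'⟩ :=
        ih C hC hCE hCneg q hq hc (by simpa using Nat.le_of_succ_le_succ hlen)
      obtain ⟨w, D, hD, heD, hDneg, hDE⟩ :=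
        step σ hNC C' hC' hC'E hC'neg hzC' hBadj.symm
      refine ⟨w, D, hD, hDE, hDneg, ?_⟩
      have : s(x, z) ∈ D.edges := by rwa [Sym2.eq_swap] at heD
      exact D.fst_mem_support_of_mem_edges this

lemma mem_deleteVerts_edgeSet {B : G.Subgraph} {s : Set V} {f : Sym2 V}
    (hf : f ∈ B.edgeSet) (h : ∀ a ∈ f, a ∉ s) : f ∈ (B.deleteVerts s).edgeSet := by
  induction f with
  | _ a b =>
    have hadj : B.Adj a b := Subgraph.mem_edgeSet.mp hf
    rw [Subgraph.mem_edgeSet, Subgraph.deleteVerts_adj]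
    exact ⟨hadj.fst_mem, h a (by simp), hadj.snd_mem, h b (by simp), hadj⟩

lemma mem_support_of_mem_edge {a c : V} (p : G.Walk a c) {f : Sym2 V} (hf : f ∈ p.edges)
    {t : V} (ht : t ∈ f) : t ∈ p.support := by
  induction f with
  | _ s r =>
    rcases Sym2.mem_iff.mp ht with rfl | rfl
    · exact p.fst_mem_support_of_mem_edges hf
    · exact p.snd_mem_support_of_mem_edges hf

lemma dropUntil_avoids [DecidableEq V] {v z u : V} {q : G.Walk v z} (hq : q.IsPath)
    (hu : u ∈ q.support) (huv : u ≠ v) : v ∉ (q.dropUntil u hu).support := by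
  intro hmem
  have hspec := q.take_spec hu
  have hnd : q.support.Nodup := hq.support_nodup
  have hsup : (q.takeUntil u hu).support ++ (q.dropUntil u hu).support.tail = q.support := by
    rw [← Walk.support_append, hspec]
  rw [← hsup, List.nodup_append] at hnd
  have hvT : v ∈ (q.takeUntil u hu).support := (q.takeUntil u hu).start_mem_support
  have hvD : v ∈ (q.dropUntil u hu).support.tail := by
    have := (q.dropUntil u hu).support_eq_cons
    rw [this, List.mem_cons] at hmem
    rcases hmem with h | h
    · exact absurd h.symm huv
    · exact h
  exact hnd.2.2 _ hvT _ hvD rfl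

/-- For a path `p : z → v` with `z ≠ v`, the subgraph of `p` minus the endpoint `v`
is connected. -/

lemma path_deleteEnd_connected [DecidableEq V] {z v : V} (p : G.Walk z v)
    (hp : p.IsPath) (hzv : z ≠ v) : (p.toSubgraph.deleteVerts {v}).Connected := by
  set H := p.toSubgraph.deleteVerts {v} with hH
  rw [Subgraph.connected_iff_forall_exists_walk_subgraph]
  have hzH : z ∈ H.verts := by
    simp only [hH, Subgraph.deleteVerts_verts, Set.mem_diff, Set.mem_singleton_iff]
    exact ⟨p.start_mem_verts_toSubgraph, hzv⟩
  refine ⟨⟨z, hzH⟩, ?_⟩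
  have hq : p.reverse.IsPath := hp.reverse
  intro u₁ u₂ h₁ h₂
  simp only [hH, Subgraph.deleteVerts_verts, Set.mem_diff, Set.mem_singleton_iff,
    Walk.mem_verts_toSubgraph] at h₁ h₂
  have h₁q : u₁ ∈ p.reverse.support := by rw [Walk.support_reverse, List.mem_reverse]; exact h₁.1
  have h₂q : u₂ ∈ p.reverse.support := by rw [Walk.support_reverse, List.mem_reverse]; exact h₂.1
  set d₁ := p.reverse.dropUntil u₁ h₁q with hd₁
  set d₂ := p.reverse.dropUntil u₂ h₂q with hd₂
  have hv₁ : v ∉ d₁.support := dropUntil_avoids hq h₁q h₁.2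
  have hv₂ : v ∉ d₂.support := dropUntil_avoids hq h₂q h₂.2
  refine ⟨(d₁.append d₂.reverse), toSubgraph_le_of _ _ ?_ ?_⟩
  · intro t ht
    rw [Walk.mem_support_append_iff] at ht
    have htp : t ∈ p.support ∧ t ≠ v := by
      rcases ht with ht | ht
      · refine ⟨?_, fun hh => hv₁ (hh ▸ ht)⟩
        have := p.reverse.support_dropUntil_subset h₁q ht
        rwa [Walk.support_reverse, List.mem_reverse] at this
      · rw [Walk.support_reverse, List.mem_reverse] at ht
        refine ⟨?_, fun hh => hv₂ (hh ▸ ht)⟩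
        have := p.reverse.support_dropUntil_subset h₂q ht
        rwa [Walk.support_reverse, List.mem_reverse] at this
    simp only [hH, Subgraph.deleteVerts_verts, Set.mem_diff, Set.mem_singleton_iff,
      Walk.mem_verts_toSubgraph]
    exact htp
  · intro f hf
    rw [Walk.edges_append, List.mem_append] at hf
    have hfp : f ∈ p.edges := by
      rcases hf with hf | hf
      · have := p.reverse.edges_dropUntil_subset h₁q hf
        rwa [Walk.edges_reverse, List.mem_reverse] at this
      · rw [Walk.edges_reverse, List.mem_reverse] at hf
        have := p.reverse.edges_dropUntil_subset h₂q hf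
        rwa [Walk.edges_reverse, List.mem_reverse] at this
    refine mem_deleteVerts_edgeSet (p.mem_edges_toSubgraph.mpr hfp) ?_
    intro a haf
    rw [Set.mem_singleton_iff]
    intro hav
    subst hav
    rcases hf with hf | hf
    · exact hv₁ (mem_support_of_mem_edge d₁ hf haf)
    · have := mem_support_of_mem_edge d₂.reverse hf haf
      rw [Walk.support_reverse, List.mem_reverse] at this
      exact hv₂ this

lemma backward [DecidableEq V] (σ : Sym2 V → ℤˣ) {B : G.Subgraph}
    (hBconn : B.Connected) (hNC : NoCutVertex G B)
    {u : V} (C : G.Walk u u) (hC : C.IsCycle)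
    (hCE : ∀ f ∈ C.edges, f ∈ B.edgeSet) (hCneg : ((C.edges).map σ).prod = -1)
    {x y : V} (heB : s(x, y) ∈ B.edgeSet) :
    ∃ (w : V) (D : G.Walk w w), D.IsCycle ∧ s(x, y) ∈ D.edges ∧
      ((D.edges).map σ).prod = -1 := by
  have hBadj : B.Adj x y := Subgraph.mem_edgeSet.mp heB
  have hxB : x ∈ B.verts := hBadj.fst_mem
  have huC : u ∈ C.support := C.start_mem_support
  have huB : u ∈ B.verts :=
    support_subset_verts C hC.isCircuit.not_nil hCE u huC
  rw [Subgraph.connected_iff_forall_exists_walk_subgraph] at hBconn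
  obtain ⟨p, hp⟩ := hBconn.2 hxB huB
  obtain ⟨u', C', hC', hC'E, hC'neg, hxC'⟩ :=
    reachC σ hNC p.length C hC hCE hCneg p hp huC le_rfl
  obtain ⟨w, D, hD, heD, hDneg, _⟩ := step σ hNC C' hC' hC'E hC'neg hxC' hBadj
  exact ⟨w, D, hD, heD, hDneg⟩

lemma cycle_noCutVertex [DecidableEq V] {u : V} (w : G.Walk u u) (hw : w.IsCycle) :
    NoCutVertex G w.toSubgraph := by
  intro v hv hne
  have hvsup : v ∈ w.support := w.mem_verts_toSubgraph.mp hv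
  have hrot : (w.rotate v hvsup).toSubgraph = w.toSubgraph := w.toSubgraph_rotate hvsup
  have hc' : (w.rotate v hvsup).IsCycle := hw.rotate hvsup
  obtain ⟨z, hadj, p, hp⟩ := Walk.not_nil_iff.mp hc'.isCircuit.not_nil
  have hpPath : p.IsPath := by
    have h2 := hc'; rw [hp] at h2; exact ((Walk.cons_isCycle_iff p hadj).mp h2).1
  have hzv : z ≠ v := hadj.ne'
  have hple : p.toSubgraph ≤ w.toSubgraph := by
    rw [← hrot, hp, Walk.toSubgraph]; exact le_sup_right
  have hdel : p.toSubgraph.deleteVerts {v} ≤ w.toSubgraph.deleteVerts {v} :=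
    Subgraph.deleteVerts_mono hple
  have hconn := path_deleteEnd_connected p hpPath hzv
  rw [Subgraph.connected_iff_forall_exists_walk_subgraph] at hconn ⊢
  refine ⟨hne, ?_⟩
  have hmem : ∀ a ∈ (w.toSubgraph.deleteVerts {v}).verts,
      a ∈ (p.toSubgraph.deleteVerts {v}).verts := by
    intro a ha
    simp only [Subgraph.deleteVerts_verts, Set.mem_diff, Set.mem_singleton_iff,
      Walk.mem_verts_toSubgraph] at ha ⊢
    refine ⟨?_, ha.2⟩
    have : a ∈ (w.rotate v hvsup).support := (mem_support_rotate_iff hw hvsup).mpr ha.1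
    rw [hp, Walk.support_cons, List.mem_cons] at this
    rcases this with rfl | h
    · exact absurd rfl ha.2
    · exact h
  intro a b ha hb
  obtain ⟨W, hW⟩ := hconn.2 (hmem a ha) (hmem b hb)
  exact ⟨W, le_trans hW hdel⟩

lemma chain_ub {c : Set G.Subgraph} (hchain : IsChain (· ≤ ·) c)
    (hS : ∀ B ∈ c, B.Connected ∧ NoCutVertex G B) (hne : c.Nonempty) :
    (sSup c).Connected ∧ NoCutVertex G (sSup c) := by
  constructor
  · rw [Subgraph.connected_iff_forall_exists_walk_subgraph]
    obtain ⟨B₀, hB₀⟩ := hne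
    obtain ⟨v₀, hv₀⟩ := (hS B₀ hB₀).1.nonempty
    refine ⟨⟨v₀, (le_sSup hB₀).1 hv₀⟩, ?_⟩
    intro a b ha hb
    rw [Subgraph.verts_sSup, Set.mem_iUnion₂] at ha hb
    obtain ⟨B₁, h₁, ha⟩ := ha
    obtain ⟨B₂, h₂, hb⟩ := hb
    rcases hchain.total h₁ h₂ with hle | hle
    · have hc2 := (hS B₂ h₂).1
      rw [Subgraph.connected_iff_forall_exists_walk_subgraph] at hc2
      obtain ⟨W, hW⟩ := hc2.2 (hle.1 ha) hb
      exact ⟨W, le_trans hW (le_sSup h₂)⟩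
    · have hc1 := (hS B₁ h₁).1
      rw [Subgraph.connected_iff_forall_exists_walk_subgraph] at hc1
      obtain ⟨W, hW⟩ := hc1.2 ha (hle.1 hb)
      exact ⟨W, le_trans hW (le_sSup h₁)⟩
  · intro v hv hne'
    rw [Subgraph.connected_iff_forall_exists_walk_subgraph]
    refine ⟨hne', ?_⟩
    intro a b ha hb
    simp only [Subgraph.deleteVerts_verts, Set.mem_diff, Set.mem_singleton_iff] at ha hb
    obtain ⟨haV, hav⟩ := ha
    obtain ⟨hbV, hbv⟩ := hb
    rw [Subgraph.verts_sSup, Set.mem_iUnion₂] at haV hbV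
    obtain ⟨B₁, h₁, ha⟩ := haV
    obtain ⟨B₂, h₂, hb⟩ := hbV
    have key : ∀ B ∈ c, a ∈ B.verts → b ∈ B.verts →
        ∃ W : G.Walk a b, W.toSubgraph ≤ (sSup c).deleteVerts {v} := by
      intro B hB haB hbB
      by_cases hvB : v ∈ B.verts
      · have hBconn := (hS B hB).2 v hvB ⟨a, by
          simp only [Subgraph.deleteVerts_verts, Set.mem_diff, Set.mem_singleton_iff]
          exact ⟨haB, hav⟩⟩
        rw [Subgraph.connected_iff_forall_exists_walk_subgraph] at hBconn
        obtain ⟨W, hW⟩ := hBconn.2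
          (by simp only [Subgraph.deleteVerts_verts, Set.mem_diff,
              Set.mem_singleton_iff]; exact ⟨haB, hav⟩)
          (by simp only [Subgraph.deleteVerts_verts, Set.mem_diff,
              Set.mem_singleton_iff]; exact ⟨hbB, hbv⟩)
        exact ⟨W, le_trans hW (Subgraph.deleteVerts_mono (le_sSup hB))⟩
      · have hBle : B ≤ (sSup c).deleteVerts {v} := by
          constructor
          · intro t ht
            simp only [Subgraph.deleteVerts_verts, Set.mem_diff, Set.mem_singleton_iff]
            exact ⟨(le_sSup hB).1 ht, fun h => hvB (h ▸ ht)⟩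
          · intro s t hst
            rw [Subgraph.deleteVerts_adj]
            refine ⟨(le_sSup hB).1 hst.fst_mem, fun h => hvB (h ▸ hst.fst_mem), 
              (le_sSup hB).1 hst.snd_mem, fun h => hvB (h ▸ hst.snd_mem),
              (le_sSup hB).2 hst⟩
        have hBconn := (hS B hB).1
        rw [Subgraph.connected_iff_forall_exists_walk_subgraph] at hBconn
        obtain ⟨W, hW⟩ := hBconn.2 haB hbB
        exact ⟨W, le_trans hW hBle⟩
    rcases hchain.total h₁ h₂ with hle | hle
    · exact key B₂ h₂ (hle.1 ha) hb
    · exact key B₁ h₁ ha (hle.1 hb)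

end SGAux

open SGAux in
/-- An edge belongs to a negative cycle iff it lies in an unbalanced block. -/
theorem stmt_2 (G : SimpleGraph V) (σ : Sym2 V → ℤˣ) (e : Sym2 V) (he : e ∈ G.edgeSet) :
    (∃ (u : V) (w : G.Walk u u), w.IsCycle ∧ e ∈ w.edges ∧ (w.edges.map σ).prod = -1) ↔
    (∃ B : G.Subgraph, IsBlock G B ∧ UnbalancedSub G σ B ∧ e ∈ B.edgeSet) := by
  classical
  constructor
  · rintro ⟨u, w, hw, hew, hwneg⟩
    have hB₀conn : w.toSubgraph.Connected := w.toSubgraph_connected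
    have hB₀nc : NoCutVertex G w.toSubgraph := cycle_noCutVertex w hw
    set S : Set G.Subgraph := {B | w.toSubgraph ≤ B ∧ B.Connected ∧ NoCutVertex G B} with hSdef
    have hB₀S : w.toSubgraph ∈ S := ⟨le_rfl, hB₀conn, hB₀nc⟩
    obtain ⟨m, hm_le, hm_max⟩ := zorn_le_nonempty₀ S (fun c hcS hchain y hy => by
      refine ⟨sSup c, ⟨le_trans (hcS hy).1 (le_sSup hy), ?_⟩, fun z hz => le_sSup hz⟩
      exact chain_ub hchain (fun B hB => (hcS hB).2) ⟨y, hy⟩) _ hB₀S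
    obtain ⟨hmle, hmconn, hmnc⟩ := hm_max.1
    refine ⟨m, ⟨hmconn, hmnc, ?_⟩, ⟨u, w, hw, ?_, hwneg⟩, ?_⟩
    · intro B' hB'conn hB'nc hmB'
      have hB'S : B' ∈ S := ⟨le_trans hmle hmB', hB'conn, hB'nc⟩
      exact le_antisymm (hm_max.2 hB'S hmB') hmB'
    · intro f hf
      exact Subgraph.edgeSet_mono hm_le (w.mem_edges_toSubgraph.mpr hf)
    · exact Subgraph.edgeSet_mono hm_le (w.mem_edges_toSubgraph.mpr hew)
  · intro hR
    revert he
    induction e using Sym2.ind with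
    | _ x y =>
      intro he
      obtain ⟨B, ⟨hBconn, hBnc, _⟩, ⟨u, C, hC, hCE, hCneg⟩, heB⟩ := hR
      obtain ⟨w, D, hD, heD, hDneg⟩ :=
        backward σ hBconn hBnc C hC hCE hCneg heB
      exact ⟨w, D, hD, heD, hDneg⟩
end

section
/- In a signed graph Σ, a vertex v belongs to some negative cycle if and only if v lies in an unbalanced block of Σ. -/
open SimpleGraph
variable {V : Type*}

namespace NegAux
open Walk
variable {G : SimpleGraph V} {σ : Sym2 V → ℤˣ}

lemma exists_first_hit {W : Type*} {H : SimpleGraph W} (S : Set W) :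
    ∀ {a b : W} (p : H.Walk a b), b ∈ S →
    ∃ (c : W) (q : H.Walk a c), c ∈ S ∧ q.IsPath ∧ ∀ z ∈ q.support, z ∈ S → z = c := by
  classical
  intro a b p
  induction p with
  | nil =>
    intro hb
    exact ⟨_, Walk.nil, hb, Walk.IsPath.nil, by intro z hz _; simpa using hz⟩
  | @cons a a' b h p ih =>
    intro hb
    by_cases ha : a ∈ S
    · exact ⟨_, Walk.nil, ha, Walk.IsPath.nil, by intro z hz _; simpa using hz⟩
    · obtain ⟨c, q, hc, hq, hfirst⟩ := ih hb
      refine ⟨c, (Walk.cons h q).bypass, hc, Walk.bypass_isPath _, ?_⟩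
      intro z hz hzS
      have h2 := Walk.support_bypass_subset _ hz
      rw [Walk.support_cons] at h2
      rcases List.mem_cons.mp h2 with rfl | hmem
      · exact absurd hzS ha
      · exact hfirst z hmem hzS

lemma takeUntil_cons_of_ne [DecidableEq V] {x y a : V} (h0 : G.Adj x a) (p : G.Walk a x)
    (hy : y ∈ (Walk.cons h0 p).support) (hxy : x ≠ y) (hy' : y ∈ p.support) :
    (Walk.cons h0 p).takeUntil y hy = Walk.cons h0 (p.takeUntil y hy') ∧
    (Walk.cons h0 p).dropUntil y hy = p.dropUntil y hy' := by
  constructor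
  · rw [Walk.takeUntil, dif_neg hxy]
  · rw [Walk.dropUntil, dif_neg hxy]

lemma arcs_isPath [DecidableEq V] {x y : V} {C : G.Walk x x}
    (hC : C.IsCycle) (hy : y ∈ C.support) (hxy : x ≠ y) :
    (C.takeUntil y hy).IsPath ∧ (C.dropUntil y hy).IsPath := by
  cases C with
  | nil => simp at hC
  | @cons _ a _ h0 p =>
    have hp : p.IsPath := by
      rw [Walk.isPath_def]
      have := hC.support_nodup
      simpa using this
    have hy' : y ∈ p.support := by
      have hy2 := hy
      rw [Walk.support_cons] at hy2
      rcases List.mem_cons.mp hy2 with rfl | h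
      · exact absurd rfl hxy
      · exact h
    obtain ⟨ht, hd⟩ := takeUntil_cons_of_ne h0 p hy hxy hy'
    constructor
    · rw [ht, Walk.isPath_def, Walk.support_cons, List.nodup_cons]
      refine ⟨?_, (hp.takeUntil hy').support_nodup⟩
      intro hxmem
      have hnd := hp.support_nodup
      rw [← p.take_spec hy', Walk.support_append, List.nodup_append] at hnd
      have hxdrop : x ∈ (p.dropUntil y hy').support.tail := by
        have hxd : x ∈ (p.dropUntil y hy').support := Walk.end_mem_support _
        rw [Walk.support_eq_cons] at hxd
        rcases List.mem_cons.mp hxd with h | h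
        · exact absurd h hxy
        · exact h
      exact hnd.2.2 x hxmem x hxdrop rfl
    · rw [hd]; exact hp.dropUntil hy'

lemma mem_support_rotate [DecidableEq V] {u v z : V} {w : G.Walk u u} (hv : v ∈ w.support)
    (hz : z ∈ (w.rotate v hv).support) : z ∈ w.support := by
  rw [Walk.support_eq_cons] at hz
  rcases List.mem_cons.mp hz with rfl | h
  · exact hv
  · exact List.mem_of_mem_tail (((Walk.support_rotate w v hv).mem_iff).mp h)

def NegThru (G : SimpleGraph V) (σ : Sym2 V → ℤˣ) (B : G.Subgraph) (v : V) : Prop :=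
  ∃ w : G.Walk v v, w.IsCycle ∧ (∀ z ∈ w.support, z ∈ B.verts) ∧ (w.edges.map σ).prod = -1

lemma negThru_rotate {B : G.Subgraph} {u v : V} {w : G.Walk u u}
    (hc : w.IsCycle) (hs : ∀ z ∈ w.support, z ∈ B.verts)
    (hneg : (w.edges.map σ).prod = -1) (hv : v ∈ w.support) : NegThru G σ B v := by
  classical
  refine ⟨w.rotate v hv, hc.rotate hv, fun z hz => hs z (mem_support_rotate hv hz), ?_⟩
  rw [((Walk.rotate_edges w v hv).perm.map σ).prod_eq]
  exact hneg

lemma units_combine (e a b q : ℤˣ) (h : a * b = -1) : (e * a * q) * (e * b * q) = -1 := by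
  have he := Int.units_mul_self e
  have hq := Int.units_mul_self q
  calc (e*a*q) * (e*b*q) = (e*(a*q)) * (e*(b*q)) := by rw [mul_assoc e a q, mul_assoc e b q]
    _ = (e*e) * ((a*q)*(b*q)) := by rw [mul_mul_mul_comm]
    _ = (e*e) * ((a*b)*(q*q)) := by rw [mul_mul_mul_comm a q b q]
    _ = -1 := by rw [he, hq, h, one_mul, mul_one]

lemma extension (B : G.Subgraph)
    (hNC : NoCutVertex G B) {x v : V} (C : G.Walk x x)
    (hC : C.IsCycle) (hsup : ∀ z ∈ C.support, z ∈ B.verts)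
    (hneg : (C.edges.map σ).prod = -1)
    (hv : v ∈ B.verts) (hvC : v ∉ C.support) (hadj : B.Adj v x) :
    NegThru G σ B v := by
  classical
  have hx : x ∈ C.support := C.start_mem_support
  have hvx : v ≠ x := fun h => hvC (h ▸ hx)
  set B' := B.deleteVerts {x} with hB'
  have hv' : v ∈ B'.verts := ⟨hv, by simp [hvx]⟩
  have hB'conn : B'.Connected := hNC x (hsup x hx) ⟨v, hv'⟩
  have hlen : 0 < C.length := by have := hC.three_le_length; omega
  have hy0adj : G.Adj x (C.getVert 1) := by
    simpa using C.adj_getVert_succ hlen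
  have hy0mem : C.getVert 1 ∈ C.support :=
    Walk.mem_support_iff_exists_getVert.mpr ⟨1, rfl, by omega⟩
  have hy0' : C.getVert 1 ∈ B'.verts := ⟨hsup _ hy0mem, by simp [hy0adj.ne.symm]⟩
  obtain ⟨pw⟩ := hB'conn ⟨v, hv'⟩ ⟨_, hy0'⟩
  obtain ⟨c, q, hcS, hq, hfirst⟩ :=
    exists_first_hit {z : B'.verts | (z : V) ∈ C.support} pw hy0mem
  set Q : G.Walk v (c : V) := q.map B'.hom with hQdef
  have hQpath : Q.IsPath := Walk.map_isPath_of_injective Subtype.val_injective hq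
  have hQsup : ∀ z ∈ Q.support, z ∈ B'.verts := by
    intro z hz
    replace hz : z ∈ (q.map B'.hom).support := hz
    rw [Walk.support_map] at hz
    obtain ⟨z', hz', rfl⟩ := List.mem_map.mp hz
    exact z'.2
  have hQfirst : ∀ z ∈ Q.support, z ∈ C.support → z = (c : V) := by
    intro z hz hzC
    replace hz : z ∈ (q.map B'.hom).support := hz
    rw [Walk.support_map] at hz
    obtain ⟨z', hz', rfl⟩ := List.mem_map.mp hz
    exact congrArg Subtype.val (hfirst z' hz' hzC)
  have hyC : (c : V) ∈ C.support := hcS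
  have hyx : x ≠ (c : V) := fun h => c.2.2 (by simp [← h])
  obtain ⟨hA1, hA2⟩ := arcs_isPath hC hyC hyx
  set A1 := C.takeUntil (c : V) hyC with hA1def
  set A2 := C.dropUntil (c : V) hyC with hA2def
  have hGadj : G.Adj v x := B.adj_sub hadj
  have key : ∀ (A : G.Walk x (c : V)), A.IsPath → (∀ z ∈ A.support, z ∈ C.support) →
      (∀ e ∈ A.edges, e ∈ C.edges) →
      ∃ w : G.Walk v v, w.IsCycle ∧ (∀ z ∈ w.support, z ∈ B.verts) ∧
        (w.edges.map σ).prod = σ s(v, x) * (A.edges.map σ).prod * (Q.edges.map σ).prod := by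
    intro A hA hAsup hAedge
    have hP : (A.append Q.reverse).IsPath := by
      rw [Walk.isPath_def, Walk.support_append, List.nodup_append]
      refine ⟨hA.support_nodup, ?_, ?_⟩
      · exact hQpath.reverse.support_nodup.tail
      · intro z hzA z' hzT hzz
        subst hzz
        have hzQ : z ∈ Q.support := by
          have h3 : z ∈ Q.reverse.support := List.mem_of_mem_tail hzT
          rwa [Walk.support_reverse, List.mem_reverse] at h3
        have hzc : z = (c : V) := hQfirst z hzQ (hAsup z hzA)
        subst hzc
        have hnd := hQpath.reverse.support_nodup
        rw [Walk.support_eq_cons] at hnd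
        exact (List.nodup_cons.mp hnd).1 hzT
    have hedge : s(v, x) ∉ (A.append Q.reverse).edges := by
      rw [Walk.edges_append]
      intro hmem
      rcases List.mem_append.mp hmem with hA' | hQ'
      · exact hvC (Walk.fst_mem_support_of_mem_edges C (hAedge _ hA'))
      · have h4 : x ∈ Q.reverse.support := Walk.snd_mem_support_of_mem_edges _ hQ'
        rw [Walk.support_reverse, List.mem_reverse] at h4
        exact (hQsup x h4).2 rfl
    refine ⟨Walk.cons hGadj (A.append Q.reverse), ?_, ?_, ?_⟩
    · exact (Walk.cons_isCycle_iff _ hGadj).mpr ⟨hP, hedge⟩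
    · intro z hz
      rw [Walk.support_cons] at hz
      rcases List.mem_cons.mp hz with rfl | hz'
      · exact hv
      · rw [Walk.mem_support_append_iff] at hz'
        rcases hz' with hzA | hzQ
        · exact hsup z (hAsup z hzA)
        · rw [Walk.support_reverse, List.mem_reverse] at hzQ
          exact (hQsup z hzQ).1
    · rw [Walk.edges_cons, List.map_cons, List.prod_cons, Walk.edges_append, List.map_append,
        List.prod_append, Walk.edges_reverse, List.map_reverse, List.prod_reverse]
      rw [mul_assoc]
  obtain ⟨w1, hw1c, hw1s, hw1p⟩ := key A1 hA1
    (fun z hz => Walk.support_takeUntil_subset _ _ hz)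
    (fun e he => Walk.edges_takeUntil_subset _ _ he)
  obtain ⟨w2, hw2c, hw2s, hw2p⟩ := key A2.reverse hA2.reverse
    (fun z hz => Walk.support_dropUntil_subset _ _
      (by rwa [Walk.support_reverse, List.mem_reverse] at hz))
    (fun e he => Walk.edges_dropUntil_subset _ _
      (by rwa [Walk.edges_reverse, List.mem_reverse] at he))
  have hCE : C.edges = A1.edges ++ A2.edges := by
    conv_lhs => rw [← Walk.take_spec C hyC]
    rw [Walk.edges_append]
  have harcs : (A1.edges.map σ).prod * ((A2.reverse.edges).map σ).prod = -1 := by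
    rw [Walk.edges_reverse, List.map_reverse, List.prod_reverse, ← List.prod_append,
      ← List.map_append, ← hCE, hneg]
  have hprod : (w1.edges.map σ).prod * (w2.edges.map σ).prod = -1 := by
    rw [hw1p, hw2p]
    exact units_combine _ _ _ _ harcs
  rcases Int.units_eq_one_or ((w1.edges.map σ).prod) with h1 | h1
  · rw [h1, one_mul] at hprod
    exact ⟨w2, hw2c, hw2s, hprod⟩
  · exact ⟨w1, hw1c, hw1s, h1⟩


lemma step {B : G.Subgraph} (hNC : NoCutVertex G B) {v x : V}
    (hx : NegThru G σ B x) (hv : v ∈ B.verts) (hadj : B.Adj v x) : NegThru G σ B v := by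
  obtain ⟨D, hDc, hDs, hDn⟩ := hx
  by_cases hvD : v ∈ D.support
  · exact negThru_rotate hDc hDs hDn hvD
  · exact extension B hNC D hDc hDs hDn hv hvD hadj

lemma negThru_of_reachable {B : G.Subgraph} (hNC : NoCutVertex G B) :
    ∀ {a b : B.verts} (p : B.coe.Walk a b), NegThru G σ B ↑b → NegThru G σ B ↑a := by
  intro a b p
  induction p with
  | nil => exact id
  | @cons a a' b h p ih =>
    intro hb
    exact step hNC (ih hb) a.2 h

lemma cycle_support_mem_edge {u : V} {w : G.Walk u u} (hc : w.IsCycle) :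
    ∀ z ∈ w.support, ∃ e ∈ w.edges, z ∈ e := by
  have haux : ∀ {a b : V} (p : G.Walk a b), ∀ z ∈ p.support, z = b ∨ ∃ e ∈ p.edges, z ∈ e := by
    intro a b p
    induction p with
    | nil => intro z hz; left; simpa using hz
    | @cons a a' b h p ih =>
      intro z hz
      rw [Walk.support_cons] at hz
      rcases List.mem_cons.mp hz with rfl | hz'
      · exact Or.inr ⟨s(z, a'), by simp [Walk.edges_cons], by simp⟩
      · rcases ih z hz' with rfl | he
        · left; rfl
        · obtain ⟨e, he1, he2⟩ := he
          exact Or.inr ⟨e, by simp [Walk.edges_cons, he1], he2⟩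
  intro z hz
  rcases haux w z hz with rfl | he
  · have hlen : 0 < w.length := by have := hc.three_le_length; omega
    have hadj : w.toSubgraph.Adj z (w.getVert 1) := by
      simpa using w.toSubgraph_adj_getVert hlen
    exact ⟨s(z, w.getVert 1), w.mem_edges_toSubgraph.mp (Subgraph.mem_edgeSet.mpr hadj), by simp⟩
  · exact he

lemma cycle_deleteVerts_connected [DecidableEq V] {x : V} {C : G.Walk x x} (hC : C.IsCycle) :
    ((C.toSubgraph.deleteVerts {x})).Connected := by
  cases C with
  | nil => simp at hC
  | @cons _ a _ h0 p =>
    have hp : p.IsPath := by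
      rw [Walk.isPath_def]
      have := hC.support_nodup
      simpa using this
    have h3 := hC.three_le_length
    rw [Walk.length_cons] at h3
    have hnp : ¬ p.reverse.Nil := by
      rw [Walk.nil_iff_length_eq, Walk.length_reverse]
      omega
    set r := p.reverse.tail with hrdef
    have hcons : Walk.cons (p.reverse.adj_snd hnp) r = p.reverse :=
      Walk.cons_tail_eq p.reverse hnp
    have hrev : p.reverse.support = x :: r.support := by
      have h4 := congrArg Walk.support hcons
      rw [Walk.support_cons] at h4
      exact h4.symm
    have hxr : x ∉ r.support := by
      have hnd := hp.reverse.support_nodup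
      rw [hrev, List.nodup_cons] at hnd
      exact hnd.1
    have adjE : ∀ {u' v' : V} (w : G.Walk u' v') (a b : V),
        w.toSubgraph.Adj a b ↔ s(a, b) ∈ w.edges := by
      intro u' v' w a b
      rw [← Walk.mem_edges_toSubgraph, Subgraph.mem_edgeSet]
    have hpe : ∀ e, e ∈ p.edges ↔ e = s(x, p.reverse.getVert 1) ∨ e ∈ r.edges := by
      intro e
      have h4 := congrArg Walk.edges hcons
      rw [Walk.edges_cons] at h4
      rw [← List.mem_reverse, ← Walk.edges_reverse, ← h4, List.mem_cons]
    have hrsupp : ∀ z ∈ r.support, z ∈ p.support := by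
      intro z hz
      have h5 : z ∈ p.reverse.support := by
        rw [hrev]; exact List.mem_cons_of_mem _ hz
      rwa [Walk.support_reverse, List.mem_reverse] at h5
    have heq : (Walk.cons h0 p).toSubgraph.deleteVerts {x} = r.toSubgraph := by
      refine Subgraph.ext ?_ ?_
      · ext z
        simp only [Subgraph.deleteVerts_verts, Set.mem_diff, Walk.mem_verts_toSubgraph,
          Walk.verts_toSubgraph, Set.mem_setOf_eq, Walk.support_cons, List.mem_cons,
          Set.mem_singleton_iff]
        constructor
        · rintro ⟨hz1 | hz2, hzx⟩
          · exact absurd hz1 hzx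
          · have h6 : z ∈ p.reverse.support := by
              rwa [Walk.support_reverse, List.mem_reverse]
            rw [hrev] at h6
            rcases List.mem_cons.mp h6 with rfl | h
            · exact absurd rfl hzx
            · exact h
        · intro hz
          exact ⟨Or.inr (hrsupp z hz), fun h => hxr (h ▸ hz)⟩
      · ext a b
        constructor
        · intro hdel
          rw [Subgraph.deleteVerts_adj] at hdel
          obtain ⟨ha, hax, hb, hbx, hadj2⟩ := hdel
          rw [adjE] at hadj2
          rw [Walk.edges_cons, List.mem_cons] at hadj2
          rw [adjE]
          rcases hadj2 with heq2 | hmem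
          · rcases Sym2.eq_iff.mp heq2 with ⟨rfl, rfl⟩ | ⟨rfl, rfl⟩
            · exact (hax rfl).elim
            · exact (hbx rfl).elim
          · rcases (hpe _).mp hmem with heq2 | hmem2
            · rcases Sym2.eq_iff.mp heq2 with ⟨rfl, _⟩ | ⟨_, rfl⟩
              · exact (hax rfl).elim
              · exact (hbx rfl).elim
            · exact hmem2
        · intro hr2
          have hr2' : s(a, b) ∈ r.edges := (adjE r a b).mp hr2
          have haS : a ∈ r.support := Walk.fst_mem_support_of_mem_edges r hr2'
          have hbS : b ∈ r.support := Walk.snd_mem_support_of_mem_edges r hr2'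
          rw [Subgraph.deleteVerts_adj]
          refine ⟨?_, ?_, ?_, ?_, ?_⟩
          · rw [Walk.mem_verts_toSubgraph, Walk.support_cons]
            exact List.mem_cons_of_mem _ (hrsupp a haS)
          · intro hmem
            rw [Set.mem_singleton_iff] at hmem
            subst hmem
            exact hxr haS
          · rw [Walk.mem_verts_toSubgraph, Walk.support_cons]
            exact List.mem_cons_of_mem _ (hrsupp b hbS)
          · intro hmem
            rw [Set.mem_singleton_iff] at hmem
            subst hmem
            exact hxr hbS
          · rw [adjE, Walk.edges_cons]
            exact List.mem_cons_of_mem _ ((hpe _).mpr (Or.inr hr2'))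
    rw [heq]
    exact r.toSubgraph_connected

lemma ncv_cycle {u : V} {w : G.Walk u u} (hc : w.IsCycle) : NoCutVertex G w.toSubgraph := by
  classical
  intro x hx _
  rw [Walk.mem_verts_toSubgraph] at hx
  rw [← Walk.toSubgraph_rotate w hx]
  exact cycle_deleteVerts_connected (hc.rotate hx)

lemma exists_block (C0 : G.Subgraph) (hc : C0.Connected) (hncv : NoCutVertex G C0) :
    ∃ B : G.Subgraph, C0 ≤ B ∧ B.Connected ∧ NoCutVertex G B ∧
      ∀ B' : G.Subgraph, B'.Connected → NoCutVertex G B' → B ≤ B' → B' = B := by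
  have hzorn := zorn_le_nonempty₀
    {B : G.Subgraph | B.Connected ∧ NoCutVertex G B} ?_ C0 ⟨hc, hncv⟩
  · obtain ⟨m, hm1, hm2⟩ := hzorn
    exact ⟨m, hm1, hm2.prop.1, hm2.prop.2,
      fun B' h1 h2 hle => le_antisymm (hm2.2 ⟨h1, h2⟩ hle) hle⟩
  · intro c hcs hchain y hy
    refine ⟨sSup c, ⟨?_, ?_⟩, fun z hz => le_sSup hz⟩
    · rw [Subgraph.connected_iff]
      constructor
      · refine ⟨fun aa bb => ?_⟩
        obtain ⟨a, ha⟩ := aa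
        obtain ⟨b, hb⟩ := bb
        rw [Subgraph.verts_sSup] at ha hb
        simp only [Set.mem_iUnion] at ha hb
        obtain ⟨B1, hB1, ha1⟩ := ha
        obtain ⟨B2, hB2, hb1⟩ := hb
        obtain ⟨B3, hB3, h13, h23⟩ := hchain.directedOn B1 hB1 B2 hB2
        have hr : B3.coe.Reachable ⟨a, h13.1 ha1⟩ ⟨b, h23.1 hb1⟩ :=
          (hcs hB3).1.preconnected.coe _ _
        exact Reachable.map (Subgraph.inclusion (le_sSup hB3)) hr
      · obtain ⟨pt, hpt⟩ := (hcs hy).1.nonempty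
        exact ⟨pt, (le_sSup hy).1 hpt⟩
    · intro x hx hne
      rw [Subgraph.connected_iff]
      refine ⟨⟨fun aa bb => ?_⟩, hne⟩
      obtain ⟨a, ha⟩ := aa
      obtain ⟨b, hb⟩ := bb
      rw [Subgraph.deleteVerts_verts, Subgraph.verts_sSup] at ha hb
      obtain ⟨ha1, hax⟩ := ha
      obtain ⟨hb1, hbx⟩ := hb
      simp only [Set.mem_iUnion] at ha1 hb1
      obtain ⟨B1, hB1, ha1⟩ := ha1
      obtain ⟨B2, hB2, hb1⟩ := hb1
      obtain ⟨B3, hB3, h13, h23⟩ := hchain.directedOn B1 hB1 B2 hB2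
      by_cases hxB3 : x ∈ B3.verts
      · have hconn3 : (B3.deleteVerts {x}).Connected :=
          (hcs hB3).2 x hxB3 ⟨a, ⟨h13.1 ha1, hax⟩⟩
        have hr : (B3.deleteVerts {x}).coe.Reachable ⟨a, ⟨h13.1 ha1, hax⟩⟩ ⟨b, ⟨h23.1 hb1, hbx⟩⟩ :=
          hconn3.preconnected.coe _ _
        exact Reachable.map (Subgraph.inclusion (Subgraph.deleteVerts_mono (le_sSup hB3))) hr
      · have hvempty : B3.verts ∩ {x} = ∅ := by
          ext z
          simp only [Set.mem_inter_iff, Set.mem_singleton_iff, Set.mem_empty_iff_false,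
            iff_false, not_and]
          rintro hz rfl
          exact hxB3 hz
        have heq : B3.deleteVerts {x} = B3 := by
          rw [← Subgraph.deleteVerts_inter_verts_left_eq, hvempty, Subgraph.deleteVerts_empty]
        have hr : B3.coe.Reachable ⟨a, h13.1 ha1⟩ ⟨b, h23.1 hb1⟩ :=
          (hcs hB3).1.preconnected.coe _ _
        have hle' : B3 ≤ (sSup c).deleteVerts {x} :=
          heq ▸ Subgraph.deleteVerts_mono (le_sSup hB3)
        exact Reachable.map (Subgraph.inclusion hle') hr
end NegAux


/-- A vertex belongs to a negative cycle iff it lies in an unbalanced block. -/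
theorem stmt_3 (G : SimpleGraph V) (σ : Sym2 V → ℤˣ) (v : V) :
    (∃ (u : V) (w : G.Walk u u), w.IsCycle ∧ v ∈ w.support ∧ (w.edges.map σ).prod = -1) ↔
    (∃ B : G.Subgraph, IsBlock G B ∧ UnbalancedSub G σ B ∧ v ∈ B.verts) := by
  constructor
  · rintro ⟨u, w, hc, hvs, hneg⟩
    obtain ⟨B, hle, hconn, hncv, hmax⟩ :=
      NegAux.exists_block w.toSubgraph w.toSubgraph_connected (NegAux.ncv_cycle hc)
    refine ⟨B, ⟨hconn, hncv, hmax⟩, ⟨u, w, hc, ?_, hneg⟩, ?_⟩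
    · intro e he
      exact Subgraph.edgeSet_mono hle (w.mem_edges_toSubgraph.mpr he)
    · exact hle.1 (w.mem_verts_toSubgraph.mpr hvs)
  · rintro ⟨B, ⟨hconn, hncv, _⟩, ⟨u, w, hc, hBe, hneg⟩, hvB⟩
    have hsup : ∀ z ∈ w.support, z ∈ B.verts := by
      intro z hz
      obtain ⟨e, he, hze⟩ := NegAux.cycle_support_mem_edge hc z hz
      exact Subgraph.mem_verts_of_mem_edge (hBe e he) hze
    obtain ⟨p⟩ := hconn ⟨v, hvB⟩ ⟨u, hsup u w.start_mem_support⟩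
    obtain ⟨w', hc', _, hneg'⟩ := NegAux.negThru_of_reachable hncv p ⟨w, hc, hsup, hneg⟩
    exact ⟨v, w', hc', w'.start_mem_support, hneg'⟩
end

section
/- A signed graph Σ is balanced if and only if there is a function θ : V(Σ) → {+1, −1} such that for every edge uv, σ(uv) = θ(u)·θ(v). (Harary's balance theorem.) -/
open SimpleGraph
variable {V : Type*}

private lemma sp_append {G : SimpleGraph V} (σ : Sym2 V → ℤˣ) {u v w : V}
    (p : G.Walk u v) (q : G.Walk v w) :
    ((p.append q).edges.map σ).prod = (p.edges.map σ).prod * (q.edges.map σ).prod := by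
  simp [Walk.edges_append]

private lemma split_at_tail_mem {G : SimpleGraph V} (σ : Sym2 V → ℤˣ) {x u : V}
    (q : G.Walk x u) (hx : x ∈ q.support.tail) :
    ∃ (c : G.Walk x x) (r : G.Walk x u), 1 ≤ c.length ∧ c.length + r.length = q.length ∧
      (q.edges.map σ).prod = (c.edges.map σ).prod * (r.edges.map σ).prod := by
  classical
  cases q with
  | nil => simp at hx
  | cons h2 q2 =>
    rename_i y
    rw [Walk.support_cons] at hx
    simp only [List.tail_cons] at hx
    refine ⟨Walk.cons h2 (q2.takeUntil x hx), q2.dropUntil x hx, by simp, ?_, ?_⟩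
    · have := congrArg Walk.length (q2.take_spec hx)
      rw [Walk.length_append] at this
      simp [Walk.length_cons]
      omega
    · have := congrArg (fun w : G.Walk y u => (w.edges.map σ).prod) (q2.take_spec hx)
      simp only [sp_append] at this
      simp [Walk.edges_cons, ← this, mul_assoc]

private lemma closed_sign {G : SimpleGraph V} {σ : Sym2 V → ℤˣ} (hb : SBalanced G σ) :
    ∀ (n : ℕ) (u : V) (w : G.Walk u u), w.length ≤ n → (w.edges.map σ).prod = 1 := by
  classical
  intro n
  induction n with
  | zero =>
    intro u w hw
    cases w with
    | nil => simp
    | cons h p => simp at hw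
  | succ n ih =>
    intro u w hw
    cases w with
    | nil => simp
    | cons h p =>
      rename_i v
      by_cases hp : p.IsPath
      · by_cases he : s(u, v) ∈ p.edges
        · cases p with
          | nil => simp at he
          | cons h2 p2 =>
            rename_i y
            rw [Walk.edges_cons, List.mem_cons] at he
            rcases he with he | he
            · have huy : u = y := by
                rcases Sym2.eq_iff.mp he with ⟨h1, h2'⟩ | ⟨h1, h2'⟩
                · exact absurd h1 h.ne
                · exact h1
              subst huy
              have hnil : p2 = Walk.nil := Walk.isPath_iff_eq_nil.mp hp.of_cons
              subst hnil
              have : s(v, u) = s(u, v) := Sym2.eq_swap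
              simp [this, Int.units_mul_self]
            · have hv : v ∈ p2.support := Walk.snd_mem_support_of_mem_edges p2 he
              have := (Walk.cons_isPath_iff h2 p2).mp hp
              exact absurd hv this.2
        · exact hb u _ ((Walk.cons_isCycle_iff p h).mpr ⟨hp, he⟩)
      · rw [Walk.isPath_def] at hp
        obtain ⟨x, hdup⟩ := List.exists_duplicate_iff_not_nodup.mpr hp
        have hx : x ∈ p.support := hdup.mem
        have hcount : 2 ≤ p.support.count x := List.duplicate_iff_two_le_count.mp hdup
        have hxt : x ∈ (p.dropUntil x hx).support.tail := by
          have hsup : p.support = (p.takeUntil x hx).support ++ (p.dropUntil x hx).support.tail := by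
            conv_lhs => rw [← p.take_spec hx]
            rw [Walk.support_append]
          rw [hsup, List.count_append, Walk.count_support_takeUntil_eq_one] at hcount
          have : 0 < (p.dropUntil x hx).support.tail.count x := by omega
          exact List.count_pos_iff.mp this
        obtain ⟨c, r, hc1, hlen, hprod⟩ := split_at_tail_mem σ (p.dropUntil x hx) hxt
        have hlen2 : (p.takeUntil x hx).length + (p.dropUntil x hx).length = p.length := by
          have := congrArg Walk.length (p.take_spec hx)
          rwa [Walk.length_append] at this
        have hplen : p.length ≤ n := by
          rw [Walk.length_cons] at hw; omega
        have hprodp : (p.edges.map σ).prod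
            = ((p.takeUntil x hx).edges.map σ).prod * ((p.dropUntil x hx).edges.map σ).prod := by
          have := congrArg (fun w : G.Walk v u => (w.edges.map σ).prod) (p.take_spec hx)
          simp only [sp_append] at this
          exact this.symm
        have hcprod : (c.edges.map σ).prod = 1 := ih x c (by omega)
        have hw' : ((Walk.cons h ((p.takeUntil x hx).append r)).edges.map σ).prod = 1 := by
          apply ih u
          rw [Walk.length_cons, Walk.length_append]
          omega
        rw [Walk.edges_cons, List.map_cons, List.prod_cons, sp_append] at hw'
        rw [Walk.edges_cons, List.map_cons, List.prod_cons]
        rw [hprodp, hprod, hcprod, one_mul]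
        exact hw'

/-- Harary'"'"'s balance theorem: a signed graph is balanced iff there is a vertex
sign function `θ` with `σ(uv) = θ(u)·θ(v)` for every edge `uv`. -/
theorem stmt_9 (G : SimpleGraph V) (σ : Sym2 V → ℤˣ) :
    SBalanced G σ ↔ ∃ θ : V → ℤˣ, ∀ u v : V, G.Adj u v → σ s(u, v) = θ u * θ v := by
  classical
  constructor
  · intro hb
    have key : ∀ (a : V) (w : G.Walk a a), (w.edges.map σ).prod = 1 :=
      fun a w => closed_sign hb w.length a w le_rfl
    have hre : ∀ v : V, G.Reachable (G.connectedComponentMk v).out v :=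
      fun v => ConnectedComponent.eq.mp ((G.connectedComponentMk v).out_eq)
    refine ⟨fun v => (((hre v).some).edges.map σ).prod, ?_⟩
    intro u v h
    have hout : (G.connectedComponentMk u).out = (G.connectedComponentMk v).out :=
      congrArg _ (ConnectedComponent.sound h.reachable)
    set p := (hre u).some with hp
    set q := (hre v).some with hq
    have hkey := key _ (p.append (Walk.cons h (q.reverse.copy rfl hout.symm)))
    rw [sp_append, Walk.edges_cons, List.map_cons, List.prod_cons, Walk.edges_copy,
      Walk.edges_reverse, List.map_reverse, List.prod_reverse] at hkey
    rcases Int.units_eq_one_or ((p.edges.map σ).prod) with h1 | h1 <;>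
      rcases Int.units_eq_one_or ((q.edges.map σ).prod) with h2 | h2 <;>
      rcases Int.units_eq_one_or (σ s(u, v)) with h3 | h3 <;>
      simp_all
  · rintro ⟨θ, hθ⟩ u w hw
    have key : ∀ {a b : V} (w : G.Walk a b), (w.edges.map σ).prod = θ a * θ b := by
      intro a b w
      induction w with
      | nil => simp [(Int.units_mul_self (θ _)).symm]
      | @cons a x b h p ih =>
        rw [Walk.edges_cons, List.map_cons, List.prod_cons, ih, hθ _ _ h, mul_assoc,
          ← mul_assoc (θ x), Int.units_mul_self, one_mul]
    rw [key w, Int.units_mul_self]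
end

section
/- In a 2-connected unbalanced signed graph Σ, for every edge e there exists a negative cycle through e, and also there exist two cycles through e of opposite signs, unless every cycle through e is negative. -/
open SimpleGraph
variable {V : Type*}

section Helpers

set_option linter.unusedSectionVars false

variable [DecidableEq V] {G : SimpleGraph V} {σ : Sym2 V → ℤˣ}


/-- Glue two internally-disjoint paths into a cycle. -/
lemma append_isCycle {u v : V} (p : G.Walk u v) (q : G.Walk v u)
    (hp : p.IsPath) (hq : q.IsPath) (huv : u ≠ v)
    (hsup : ∀ x ∈ p.support, x ∈ q.support → x = u ∨ x = v)
    (hedg : ∀ a ∈ p.edges, a ∉ q.edges) : (p.append q).IsCycle := by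
  have hpn : p.support.Nodup := hp.support_nodup
  have hqn : q.support.Nodup := hq.support_nodup
  have hpc := hpn; rw [p.support_eq_cons] at hpc
  have hqc := hqn; rw [q.support_eq_cons] at hqc
  have hpt : u ∉ p.support.tail := (List.nodup_cons.mp hpc).1
  have hqt : v ∉ q.support.tail := (List.nodup_cons.mp hqc).1
  rw [Walk.isCycle_def]
  refine ⟨?_, ?_, ?_⟩
  · rw [Walk.isTrail_def, Walk.edges_append, List.nodup_append]
    exact ⟨hp.isTrail.edges_nodup, hq.isTrail.edges_nodup, fun a ha b hb hab => hedg a ha (by rw [hab]; exact hb)⟩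
  · intro hnil
    have := congrArg Walk.length hnil
    rw [Walk.length_append] at this
    simp only [Walk.length_nil] at this
    exact huv (p.eq_of_length_eq_zero (by omega))
  · have hps : (p.append q).support = p.support ++ q.support.tail := Walk.support_append p q
    rw [hps, p.support_eq_cons, List.cons_append, List.tail_cons, List.nodup_append']
    refine ⟨(List.nodup_cons.mp hpc).2, (List.nodup_cons.mp hqc).2, ?_⟩
    intro x hxp hxq
    have hx1 : x ∈ p.support := by rw [p.support_eq_cons]; exact List.mem_cons_of_mem _ hxp
    have hx2 : x ∈ q.support := by rw [q.support_eq_cons]; exact List.mem_cons_of_mem _ hxq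
    rcases hsup x hx1 hx2 with rfl | rfl
    · exact hpt hxp
    · exact hqt hxq

/-- Truncate a path at the first vertex belonging to a set `S`. -/
lemma walk_trunc (S : Set V) : ∀ {a b : V} (Q : G.Walk a b), Q.IsPath → b ∈ S →
    ∃ (w : V), w ∈ S ∧ ∃ Q' : G.Walk a w, Q'.IsPath ∧
      (∀ v ∈ Q'.support, v ∈ Q.support) ∧ (∀ v ∈ Q'.support, v ∈ S → v = w) := by
  intro a b Q
  induction Q with
  | @nil a => intro _ hb; exact ⟨a, hb, Walk.nil, by simp, by simp, by simp⟩
  | @cons a c b h q ih =>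
    intro hQ hb
    by_cases haS : a ∈ S
    · exact ⟨a, haS, Walk.nil, by simp, by simp, by simp +contextual [haS]⟩
    · obtain ⟨w, hwS, Q'', hQ''p, hsub, hfirst⟩ := ih (hQ.of_cons) hb
      refine ⟨w, hwS, Walk.cons h Q'', ?_, ?_, ?_⟩
      · rw [Walk.cons_isPath_iff]
        exact ⟨hQ''p, fun hc => ((Walk.cons_isPath_iff _ _).mp hQ).2 (hsub a hc)⟩
      · intro v hv
        rcases (by simpa [Walk.support_cons] using hv : v = a ∨ v ∈ Q''.support) with h' | h'
        · simp [h', Walk.support_cons]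
        · simp [Walk.support_cons, hsub v h']
      · intro v hv hvS
        rcases (by simpa [Walk.support_cons] using hv : v = a ∨ v ∈ Q''.support) with h' | h'
        · exact absurd (h' ▸ hvS) haS
        · exact hfirst v h' hvS

/-- From 2-connectivity: a path between two vertices avoiding a third. -/
lemma walk_avoid (z : V) (h2 : ((⊤ : G.Subgraph).deleteVerts {z}).Connected)
    {a b : V} (ha : a ≠ z) (hb : b ≠ z) :
    ∃ p : G.Walk a b, p.IsPath ∧ z ∉ p.support := by
  have haV : a ∈ ((⊤ : G.Subgraph).deleteVerts {z}).verts := by simp [ha]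
  have hbV : b ∈ ((⊤ : G.Subgraph).deleteVerts {z}).verts := by simp [hb]
  obtain ⟨w⟩ := h2 ⟨a, haV⟩ ⟨b, hbV⟩
  let w' : G.Walk a b := w.map (Subgraph.hom _)
  have hzw : z ∉ w'.support := by
    intro hc
    have hc' : z ∈ w.support.map (Subgraph.hom _) := by rw [← Walk.support_map]; exact hc
    rw [List.mem_map] at hc'
    obtain ⟨⟨x, hx⟩, -, hxz⟩ := hc'
    simp only [Subgraph.hom] at hxz
    simp [Subgraph.deleteVerts_verts, show x = z from hxz] at hx
  exact ⟨w'.toPath, w'.toPath.2, fun hc => hzw (Walk.support_toPath_subset _ hc)⟩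

lemma closed_mem_tail {c : V} (C : G.Walk c c) (hne : C ≠ Walk.nil) {v : V}
    (hv : v ∈ C.support) : v ∈ C.support.tail := by
  cases C with
  | nil => exact absurd rfl hne
  | cons h p =>
    rw [Walk.support_cons, List.tail_cons]
    rw [Walk.support_cons, List.mem_cons] at hv
    rcases hv with rfl | hv
    · exact p.end_mem_support
    · exact hv

lemma mem_support_rotate {c z v : V} (C : G.Walk c c) (hC : C.IsCycle) (hz : z ∈ C.support) :
    (v ∈ (C.rotate z hz).support ↔ v ∈ C.support) := by
  have h1 : (C.rotate z hz).support.tail ~r C.support.tail := Walk.support_rotate C z hz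
  have htl : ∀ x : V, x ∈ C.support.tail → x ∈ C.support := by
    intro x hx; rw [C.support_eq_cons]; exact List.mem_cons_of_mem _ hx
  constructor
  · intro hv
    have hv' : v ∈ z :: (C.rotate z hz).support.tail := (C.rotate z hz).support_eq_cons ▸ hv
    rcases List.mem_cons.mp hv' with rfl | h
    · exact hz
    · exact htl v (h1.mem_iff.mp h)
  · intro hv
    have : v ∈ C.support.tail := closed_mem_tail C hC.ne_nil hv
    rw [(C.rotate z hz).support_eq_cons]
    exact List.mem_cons_of_mem _ (h1.mem_iff.mpr this)

lemma two_cycles_aux {z w : V} (C' : G.Walk z z) (hC' : C'.IsCycle)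
    (hw : w ∈ C'.support) (hzw : z ≠ w) (R : G.Walk z w) (hR : R.IsPath)
    (hint : ∀ v ∈ R.support, v ∈ C'.support → v = z ∨ v = w)
    (hedg : ∀ a ∈ R.edges, a ∉ C'.edges) :
    ∃ D₁ D₂ : G.Walk z z, D₁.IsCycle ∧ D₂.IsCycle ∧
      (∀ a ∈ R.edges, a ∈ D₁.edges) ∧ (∀ a ∈ R.edges, a ∈ D₂.edges) ∧
      (∀ v ∈ R.support, v ∈ D₁.support) ∧ (∀ v ∈ R.support, v ∈ D₂.support) ∧
      (D₁.edges.map σ).prod * (D₂.edges.map σ).prod = (C'.edges.map σ).prod := by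
  cases C' with
  | nil => exact absurd rfl hC'.ne_nil
  | @cons _ z₁ _ h p =>
    obtain ⟨hpp, hep⟩ := (Walk.cons_isCycle_iff p h).mp hC'
    have hwp : w ∈ p.support := by
      rcases List.mem_cons.mp ((Walk.support_cons h p) ▸ hw) with rfl | h'
      · exact absurd rfl hzw
      · exact h'
    set A := p.takeUntil w hwp with hAdef
    set B := p.dropUntil w hwp with hBdef
    have hAB : A.append B = p := Walk.take_spec p hwp
    have hA : A.IsPath := hpp.takeUntil hwp
    have hB : B.IsPath := hpp.dropUntil hwp
    have hpsupN : p.support.Nodup := hpp.support_nodup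
    have hpsplit : p.support = A.support ++ B.support.tail := by
      rw [← hAB, Walk.support_append]
    have hdisj : ∀ x, x ∈ A.support → x ∈ B.support.tail → False := by
      rw [hpsplit] at hpsupN
      exact fun x hx hx' => (List.nodup_append'.mp hpsupN).2.2 hx hx'
    have hzB : z ∈ B.support.tail := by
      have : z ∈ B.support := B.end_mem_support
      rcases List.mem_cons.mp (B.support_eq_cons ▸ this) with rfl | h'
      · exact absurd rfl hzw
      · exact h'
    have hzA : z ∉ A.support := fun hc => hdisj z hc hzB
    have harc1 : (Walk.cons h A).IsPath := (Walk.cons_isPath_iff h A).mpr ⟨hA, hzA⟩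
    -- support inclusions into C' = cons h p
    have hAsub : ∀ x ∈ A.support, x ∈ (Walk.cons h p).support := fun x hx => by
      rw [Walk.support_cons]
      exact List.mem_cons_of_mem _ (Walk.support_takeUntil_subset p hwp hx)
    have hBsub : ∀ x ∈ B.support, x ∈ (Walk.cons h p).support := fun x hx => by
      rw [Walk.support_cons]
      exact List.mem_cons_of_mem _ (Walk.support_dropUntil_subset p hwp hx)
    have hAe : ∀ a ∈ A.edges, a ∈ (Walk.cons h p).edges := fun a ha => by
      rw [Walk.edges_cons]
      exact List.mem_cons_of_mem _ (Walk.edges_takeUntil_subset p hwp ha)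
    have hBe : ∀ a ∈ B.edges, a ∈ (Walk.cons h p).edges := fun a ha => by
      rw [Walk.edges_cons]
      exact List.mem_cons_of_mem _ (Walk.edges_dropUntil_subset p hwp ha)
    refine ⟨R.append B, (Walk.cons h A).append R.reverse, ?_, ?_, ?_, ?_, ?_, ?_, ?_⟩
    · exact append_isCycle R B hR hB hzw
        (fun x hx hx' => hint x hx (hBsub x hx'))
        (fun a ha hc => hedg a ha (hBe a hc))
    · refine append_isCycle _ R.reverse harc1 hR.reverse hzw ?_ ?_
      · intro x hx hx'
        have hx'' : x ∈ R.support := by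
          rwa [Walk.support_reverse, List.mem_reverse] at hx'
        rcases List.mem_cons.mp ((Walk.support_cons h A) ▸ hx) with rfl | h'
        · exact Or.inl rfl
        · exact hint x hx'' (hAsub x h')
      · intro a ha hc
        rw [Walk.edges_reverse, List.mem_reverse] at hc
        rcases List.mem_cons.mp ((Walk.edges_cons h A) ▸ ha) with rfl | h'
        · exact hedg _ hc (by rw [Walk.edges_cons]; exact List.mem_cons_self)
        · exact hedg a hc (hAe a h')
    · intro a ha; rw [Walk.edges_append, List.mem_append]; exact Or.inl ha
    · intro a ha
      rw [Walk.edges_append, List.mem_append, Walk.edges_reverse, List.mem_reverse]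
      exact Or.inr ha
    · intro v hv; rw [Walk.mem_support_append_iff]; exact Or.inl hv
    · intro v hv
      rw [Walk.mem_support_append_iff, Walk.support_reverse, List.mem_reverse]
      exact Or.inr hv
    · have hpe : p.edges = A.edges ++ B.edges := by rw [← hAB, Walk.edges_append]
      rw [Walk.edges_append, Walk.edges_append, Walk.edges_cons, Walk.edges_cons, hpe,
        Walk.edges_reverse]
      simp only [List.map_append, List.prod_append, List.map_cons, List.prod_cons,
        List.map_reverse, List.prod_reverse]
      generalize (R.edges.map σ).prod = r
      generalize (A.edges.map σ).prod = a
      generalize (B.edges.map σ).prod = b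
      have h2 : r * r = 1 := Int.units_mul_self r
      calc r * b * (σ s(z, z₁) * a * r) = (r * r) * (σ s(z, z₁) * (a * b)) := by ac_rfl
        _ = σ s(z, z₁) * (a * b) := by rw [h2, one_mul]


lemma two_cycles {c z w : V} (C : G.Walk c c) (hC : C.IsCycle)
    (hz : z ∈ C.support) (hw : w ∈ C.support) (hzw : z ≠ w)
    (R : G.Walk z w) (hR : R.IsPath)
    (hint : ∀ v ∈ R.support, v ∈ C.support → v = z ∨ v = w)
    (hedg : ∀ a ∈ R.edges, a ∉ C.edges) :
    ∃ D₁ D₂ : G.Walk z z, D₁.IsCycle ∧ D₂.IsCycle ∧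
      (∀ a ∈ R.edges, a ∈ D₁.edges) ∧ (∀ a ∈ R.edges, a ∈ D₂.edges) ∧
      (∀ v ∈ R.support, v ∈ D₁.support) ∧ (∀ v ∈ R.support, v ∈ D₂.support) ∧
      (D₁.edges.map σ).prod * (D₂.edges.map σ).prod = (C.edges.map σ).prod := by
  have hperm : List.Perm (C.rotate z hz).edges C.edges := (C.rotate_edges z hz).perm
  obtain ⟨D₁, D₂, h1, h2, h3, h4, h5, h6, h7⟩ :=
    two_cycles_aux (σ := σ) (C.rotate z hz) (hC.rotate hz)
      ((mem_support_rotate C hC hz).mpr hw) hzw R hR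
      (fun v hv hv' => hint v hv ((mem_support_rotate C hC hz).mp hv'))
      (fun a ha hc => hedg a ha (hperm.mem_iff.mp hc))
  exact ⟨D₁, D₂, h1, h2, h3, h4, h5, h6, by rw [h7]; exact (hperm.map σ).prod_eq⟩

/-- Key: from a cycle `C` through `x` and an edge `xy` leaving `C`, two cycles through
`x`, `y` and the edge, whose signs multiply to the sign of `C`. -/
lemma key_lemma {x y c : V} (h2 : ∀ v : V, ((⊤ : G.Subgraph).deleteVerts {v}).Connected)
    (C : G.Walk c c) (hC : C.IsCycle) (hx : x ∈ C.support) (hy : y ∉ C.support)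
    (hadj : G.Adj x y) :
    ∃ D₁ D₂ : G.Walk x x, D₁.IsCycle ∧ D₂.IsCycle ∧
      s(x,y) ∈ D₁.edges ∧ s(x,y) ∈ D₂.edges ∧ y ∈ D₁.support ∧ y ∈ D₂.support ∧
      (D₁.edges.map σ).prod * (D₂.edges.map σ).prod = (C.edges.map σ).prod := by
  -- a vertex of C different from x
  have hlen : C.support.tail.length = C.length := by
    have h1 := C.length_support
    have h2 : C.support.tail.length = C.support.length - 1 := by simp [List.length_tail]
    omega
  have h3 : 3 ≤ C.length := hC.three_le_length
  obtain ⟨a, b, t, hsupp⟩ : ∃ a b t, C.support.tail = a :: b :: t := by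
    rcases hlt : C.support.tail with _ | ⟨a, _ | ⟨b, t⟩⟩ <;> rw [hlt] at hlen <;>
      simp at hlen <;> try omega
    exact ⟨a, b, t, rfl⟩
  have hnd := hC.support_nodup
  rw [hsupp, List.nodup_cons, List.mem_cons] at hnd
  have hab : a ≠ b := fun hc => hnd.1 (Or.inl hc)
  have hmema : a ∈ C.support := by
    rw [C.support_eq_cons, hsupp]; simp
  have hmemb : b ∈ C.support := by
    rw [C.support_eq_cons, hsupp]; simp
  obtain ⟨c0, hc0C, hc0x⟩ : ∃ c0 ∈ C.support, c0 ≠ x := by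
    by_cases hax : a = x
    · exact ⟨b, hmemb, fun hc => hab (hax ▸ hc ▸ rfl)⟩
    · exact ⟨a, hmema, hax⟩
  obtain ⟨P, hP, hxP⟩ := walk_avoid x (h2 x) hadj.ne' hc0x
  obtain ⟨w, hwC, Q, hQ, hQsub, hQfirst⟩ :=
    walk_trunc {v | v ∈ C.support} P hP hc0C
  have hxQ : x ∉ Q.support := fun hc => hxP (hQsub x hc)
  have hwx : w ≠ x := fun hc => hxQ (hc ▸ Q.end_mem_support)
  have hR : (Walk.cons hadj Q).IsPath := (Walk.cons_isPath_iff hadj Q).mpr ⟨hQ, hxQ⟩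
  have hint : ∀ v ∈ (Walk.cons hadj Q).support, v ∈ C.support → v = x ∨ v = w := by
    intro v hv hvC
    rcases List.mem_cons.mp ((Walk.support_cons hadj Q) ▸ hv) with rfl | h'
    · exact Or.inl rfl
    · exact Or.inr (hQfirst v h' hvC)
  have hedg : ∀ e ∈ (Walk.cons hadj Q).edges, e ∉ C.edges := by
    intro e he hc
    rcases List.mem_cons.mp ((Walk.edges_cons hadj Q) ▸ he) with rfl | h'
    · exact hy (C.snd_mem_support_of_mem_edges hc)
    · induction e using Sym2.ind with
      | _ p q =>
        have hpq : G.Adj p q := C.adj_of_mem_edges hc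
        have hp1 : p ∈ Q.support := Q.fst_mem_support_of_mem_edges h'
        have hq1 : q ∈ Q.support := Q.snd_mem_support_of_mem_edges h'
        have hp2 : p ∈ C.support := C.fst_mem_support_of_mem_edges hc
        have hq2 : q ∈ C.support := C.snd_mem_support_of_mem_edges hc
        exact hpq.ne ((hQfirst p hp1 hp2).trans (hQfirst q hq1 hq2).symm)
  obtain ⟨D₁, D₂, h1, h2', h3', h4, h5, h6, h7⟩ :=
    two_cycles (σ := σ) C hC hx hwC (Ne.symm hwx) (Walk.cons hadj Q) hR hint hedg
  have hyR : y ∈ (Walk.cons hadj Q).support := by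
    rw [Walk.support_cons]; exact List.mem_cons_of_mem _ Q.start_mem_support
  have heR : s(x,y) ∈ (Walk.cons hadj Q).edges := by
    rw [Walk.edges_cons]; exact List.mem_cons_self
  exact ⟨D₁, D₂, h1, h2', h3' _ heR, h4 _ heR, h5 _ hyR, h6 _ hyR, h7⟩

end Helpers

/-- In a 2-connected unbalanced signed graph, every edge lies on a negative cycle;
moreover there are two cycles of opposite signs through the edge unless every cycle
through it is negative. -/
theorem stmt_14 [Fintype V] (G : SimpleGraph V) (σ : Sym2 V → ℤˣ)
    (hcard : 3 ≤ Fintype.card V) (hconn : G.Connected)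
    (h2 : ∀ v : V, ((⊤ : G.Subgraph).deleteVerts {v}).Connected)
    (hunb : ¬ SBalanced G σ) :
    ∀ e ∈ G.edgeSet,
      (∃ (u : V) (w : G.Walk u u), w.IsCycle ∧ e ∈ w.edges ∧
        (w.edges.map σ).prod = -1) ∧
      ((∃ (u₁ u₂ : V) (w₁ : G.Walk u₁ u₁) (w₂ : G.Walk u₂ u₂),
          w₁.IsCycle ∧ w₂.IsCycle ∧ e ∈ w₁.edges ∧ e ∈ w₂.edges ∧
          (w₁.edges.map σ).prod = 1 ∧ (w₂.edges.map σ).prod = -1) ∨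
        (∀ (u : V) (w : G.Walk u u), w.IsCycle → e ∈ w.edges →
          (w.edges.map σ).prod = -1)) := by
  classical
  intro e
  induction e using Sym2.ind with
  | _ x y =>
  intro he
  have hadj : G.Adj x y := G.mem_edgeSet.mp he
  have key1 : ∃ (u : V) (w : G.Walk u u), w.IsCycle ∧ s(x,y) ∈ w.edges ∧
      (w.edges.map σ).prod = -1 := by
    by_contra hcon
    push_neg at hcon
    have Hpos : ∀ (u : V) (w : G.Walk u u), w.IsCycle → s(x,y) ∈ w.edges →
        (w.edges.map σ).prod = 1 := by
      intro u w hw hew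
      rcases Int.units_eq_one_or ((w.edges.map σ).prod) with h | h
      · exact h
      · exact absurd h (hcon u w hw hew)
    -- x is "good": every cycle through x is positive
    have goodx : ∀ (u : V) (Cw : G.Walk u u), Cw.IsCycle → x ∈ Cw.support →
        (Cw.edges.map σ).prod = 1 := by
      intro u Cw hCw hxC
      by_cases heC : s(x,y) ∈ Cw.edges
      · exact Hpos u Cw hCw heC
      by_cases hyC : y ∈ Cw.support
      · -- the edge itself connects two vertices of the cycle
        have hR : (Walk.cons hadj Walk.nil).IsPath := by
          rw [Walk.cons_isPath_iff]
          exact ⟨Walk.IsPath.nil, by simp [hadj.ne]⟩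
        have hint : ∀ v ∈ (Walk.cons hadj Walk.nil).support,
            v ∈ Cw.support → v = x ∨ v = y := by
          intro v hv _
          simpa using hv
        have hedg : ∀ a ∈ (Walk.cons hadj Walk.nil).edges, a ∉ Cw.edges := by
          intro a ha
          have : a = s(x,y) := by simpa using ha
          rw [this]; exact heC
        obtain ⟨D₁, D₂, hD1, hD2, he1, he2, _, _, hprod⟩ :=
          two_cycles (σ := σ) Cw hCw hxC hyC hadj.ne (Walk.cons hadj Walk.nil) hR hint hedg
        have m1 : s(x,y) ∈ D₁.edges := he1 _ (by simp)
        have m2 : s(x,y) ∈ D₂.edges := he2 _ (by simp)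
        rw [← hprod, Hpos x D₁ hD1 m1, Hpos x D₂ hD2 m2, one_mul]
      · obtain ⟨D₁, D₂, hD1, hD2, he1, he2, _, _, hprod⟩ :=
          key_lemma (σ := σ) h2 Cw hCw hxC hyC hadj
        rw [← hprod, Hpos x D₁ hD1 he1, Hpos x D₂ hD2 he2, one_mul]
    -- goodness propagates along edges
    have propag : ∀ p q : V, G.Adj p q →
        (∀ (u : V) (Cw : G.Walk u u), Cw.IsCycle → p ∈ Cw.support →
          (Cw.edges.map σ).prod = 1) →
        (∀ (u : V) (Cw : G.Walk u u), Cw.IsCycle → q ∈ Cw.support →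
          (Cw.edges.map σ).prod = 1) := by
      intro p q hpq hGp u Cw hCw hqC
      by_cases hpC : p ∈ Cw.support
      · exact hGp u Cw hCw hpC
      · obtain ⟨D₁, D₂, hD1, hD2, _, _, hp1, hp2, hprod⟩ :=
          key_lemma (σ := σ) h2 Cw hCw hqC hpC hpq.symm
        rw [← hprod, hGp q D₁ hD1 hp1, hGp q D₂ hD2 hp2, one_mul]
    -- hence every vertex is good, so the graph is balanced
    have step : ∀ {a b : V} (p : G.Walk a b),
        (∀ (u : V) (Cw : G.Walk u u), Cw.IsCycle → a ∈ Cw.support →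
          (Cw.edges.map σ).prod = 1) →
        (∀ (u : V) (Cw : G.Walk u u), Cw.IsCycle → b ∈ Cw.support →
          (Cw.edges.map σ).prod = 1) := by
      intro a b p
      induction p with
      | nil => exact id
      | cons h q ih => exact fun hGa => ih (propag _ _ h hGa)
    apply hunb
    intro u w hw
    obtain ⟨p⟩ := hconn.preconnected x u
    exact step p goodx u w hw w.start_mem_support
  refine ⟨key1, ?_⟩
  by_cases hposex : ∃ (u : V) (w : G.Walk u u), w.IsCycle ∧ s(x,y) ∈ w.edges ∧
      (w.edges.map σ).prod = 1
  · obtain ⟨u1, w1, h1, h2', h3⟩ := hposex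
    obtain ⟨u2, w2, g1, g2, g3⟩ := key1
    exact Or.inl ⟨u1, u2, w1, w2, h1, g1, h2', g2, h3, g3⟩
  · push_neg at hposex
    right
    intro u w hw hew
    rcases Int.units_eq_one_or ((w.edges.map σ).prod) with h | h
    · exact absurd h (hposex u w hw hew)
    · exact h
end
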